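/- Let N_A, N_B ≥ 1, let Ψ_ref ∈ ℂ^{N_A} be a unit vector, and let ψ_1, …, ψ_Q ∈ ℂ^{Fin N_A × Fin N_B} be unit vectors. Then there exist a unitary matrix U indexed by Fin N_A × Fin N_B and unit vectors φ_1, …, φ_Q ∈ ℂ^{N_B} with U ψ_i = Ψ_ref ⊗ φ_i for every i, if and only if the dimension of the complex linear span of {ψ_1, …, ψ_Q} is at most N_B. (A perfect quantum autoencoder can be achieved if and only if the number of linearly independent vectors among the input states is no more than the dimension of the target latent space.) -/

import Mathlib

open Matrix

/-- The tensor (Kronecker) product of vectors: `(x ⊗ y)(a,b) = x a * y b`. -/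
def tensorVec {NA NB : ℕ} (x : Fin NA → ℂ) (y : Fin NB → ℂ) :
    Fin NA × Fin NB → ℂ :=
  fun p => x p.1 * y p.2

/-- `tensorVec x` as a linear map in the second argument. -/
def tensorLin {NA NB : ℕ} (x : Fin NA → ℂ) :
    (Fin NB → ℂ) →ₗ[ℂ] (Fin NA × Fin NB → ℂ) where
  toFun y := tensorVec x y
  map_add' y z := by funext p; simp [tensorVec, mul_add]
  map_smul' c y := by funext p; simp [tensorVec]; ring

lemma tensor_dot {NA NB : ℕ} (x : Fin NA → ℂ) (hx : star x ⬝ᵥ x = 1)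
    (y z : Fin NB → ℂ) :
    star (tensorVec x y) ⬝ᵥ tensorVec x z = star y ⬝ᵥ z := by
  have h : star (tensorVec x y) ⬝ᵥ tensorVec x z
      = (star x ⬝ᵥ x) * (star y ⬝ᵥ z) := by
    simp only [dotProduct, Pi.star_apply, tensorVec]
    rw [Fintype.sum_prod_type, Finset.sum_mul_sum]
    refine Finset.sum_congr rfl fun a _ => Finset.sum_congr rfl fun b _ => ?_
    simp only [star_mul']
    ring
  rw [h, hx, one_mul]

lemma incl_dot {d NB : ℕ} (hd : d ≤ NB) (x y : Fin d → ℂ) :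
    star (fun j : Fin NB => if hj : (j : ℕ) < d then x ⟨j, hj⟩ else 0) ⬝ᵥ
      (fun j : Fin NB => if hj : (j : ℕ) < d then y ⟨j, hj⟩ else 0)
      = star x ⬝ᵥ y := by
  classical
  set G : ℕ → ℂ := fun m => if hm : m < d then star (x ⟨m, hm⟩) * y ⟨m, hm⟩ else 0 with hG
  have h1 : star (fun j : Fin NB => if hj : (j : ℕ) < d then x ⟨j, hj⟩ else 0) ⬝ᵥ
      (fun j : Fin NB => if hj : (j : ℕ) < d then y ⟨j, hj⟩ else 0)
      = ∑ j : Fin NB, G (j : ℕ) := by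
    refine Finset.sum_congr rfl fun j _ => ?_
    by_cases hj : (j : ℕ) < d <;> simp [hG, hj]
  have h2 : star x ⬝ᵥ y = ∑ i : Fin d, G (i : ℕ) := by
    refine Finset.sum_congr rfl fun i _ => ?_
    simp [hG, i.isLt]
  rw [h1, h2, Fin.sum_univ_eq_sum_range, Fin.sum_univ_eq_sum_range]
  refine (Finset.sum_subset (Finset.range_subset_range.mpr hd) fun m _ hm => ?_).symm
  simp only [Finset.mem_range, not_lt] at hm
  simp [hG, not_lt.mpr hm]

/-- Any subspace of `ℂ^{N_A × N_B}` of dimension at most `N_B` can be isometrically mapped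
into the "reference slice" `Ψref ⊗ ℂ^{N_B}` by a global linear isometry. -/
lemma exists_isometry {NA NB : ℕ} (Ψref : Fin NA → ℂ) (href : star Ψref ⬝ᵥ Ψref = 1)
    (S : Submodule ℂ (EuclideanSpace ℂ (Fin NA × Fin NB)))
    (hS : Module.finrank ℂ S ≤ NB) :
    ∃ W : EuclideanSpace ℂ (Fin NA × Fin NB) →ₗᵢ[ℂ] EuclideanSpace ℂ (Fin NA × Fin NB),
      ∀ x : S, ∃ φ : Fin NB → ℂ,
        star φ ⬝ᵥ φ = @inner ℂ _ _ (x : EuclideanSpace ℂ (Fin NA × Fin NB))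
          (x : EuclideanSpace ℂ (Fin NA × Fin NB)) ∧
        W x = (WithLp.equiv 2 (Fin NA × Fin NB → ℂ)).symm (tensorVec Ψref φ) := by
  classical
  obtain ⟨d, hd⟩ : ∃ d, Module.finrank ℂ S = d := ⟨_, rfl⟩
  rw [hd] at hS
  let e1 : S ≃ₗᵢ[ℂ] EuclideanSpace ℂ (Fin d) :=
    ((stdOrthonormalBasis ℂ S).reindex (finCongr hd)).repr
  let ed : (Fin d → ℂ) ≃ₗ[ℂ] EuclideanSpace ℂ (Fin d) := (WithLp.linearEquiv 2 ℂ _).symm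
  let eF : (Fin NB → ℂ) ≃ₗ[ℂ] EuclideanSpace ℂ (Fin NB) := (WithLp.linearEquiv 2 ℂ _).symm
  let eE : (Fin NA × Fin NB → ℂ) ≃ₗ[ℂ] EuclideanSpace ℂ (Fin NA × Fin NB) :=
    (WithLp.linearEquiv 2 ℂ _).symm
  let inclLin : (Fin d → ℂ) →ₗ[ℂ] (Fin NB → ℂ) :=
    { toFun := fun x j => if hj : (j : ℕ) < d then x ⟨j, hj⟩ else 0
      map_add' := by intro x y; funext j; by_cases hj : (j : ℕ) < d <;> simp [hj]
      map_smul' := by intro c x; funext j; by_cases hj : (j : ℕ) < d <;> simp [hj] }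
  let incl : EuclideanSpace ℂ (Fin d) →ₗᵢ[ℂ] EuclideanSpace ℂ (Fin NB) :=
    LinearMap.isometryOfInner
      ((eF : (Fin NB → ℂ) →ₗ[ℂ] EuclideanSpace ℂ (Fin NB)) ∘ₗ inclLin ∘ₗ
        (ed.symm : EuclideanSpace ℂ (Fin d) →ₗ[ℂ] (Fin d → ℂ)))
      (fun x y => by
        rw [EuclideanSpace.inner_eq_star_dotProduct, EuclideanSpace.inner_eq_star_dotProduct,
          dotProduct_comm, dotProduct_comm (WithLp.ofLp y)]
        exact incl_dot hS (ed.symm x) (ed.symm y))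
  let TE : EuclideanSpace ℂ (Fin NB) →ₗᵢ[ℂ] EuclideanSpace ℂ (Fin NA × Fin NB) :=
    LinearMap.isometryOfInner
      ((eE : (Fin NA × Fin NB → ℂ) →ₗ[ℂ] EuclideanSpace ℂ (Fin NA × Fin NB)) ∘ₗ
        (tensorLin Ψref) ∘ₗ (eF.symm : EuclideanSpace ℂ (Fin NB) →ₗ[ℂ] (Fin NB → ℂ)))
      (fun x y => by
        rw [EuclideanSpace.inner_eq_star_dotProduct, EuclideanSpace.inner_eq_star_dotProduct,
          dotProduct_comm, dotProduct_comm (WithLp.ofLp y)]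
        exact tensor_dot Ψref href (eF.symm x) (eF.symm y))
  let L : S →ₗᵢ[ℂ] EuclideanSpace ℂ (Fin NA × Fin NB) := (TE.comp incl).comp e1.toLinearIsometry
  refine ⟨L.extend, fun x => ⟨eF.symm (incl (e1 x)), ?_, ?_⟩⟩
  · have hwx : L.extend ↑x = TE (incl (e1 x)) := L.extend_apply x
    have hW := L.extend.inner_map_map (x : EuclideanSpace ℂ (Fin NA × Fin NB)) x
    have hTE := TE.inner_map_map (incl (e1 x)) (incl (e1 x))
    rw [hwx] at hW
    rw [dotProduct_comm]
    exact hTE.symm.trans hW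
  · exact L.extend_apply x

/-- A perfect quantum autoencoder for the unit vectors `ψ_1, …, ψ_Q` (a
unitary `U` and unit vectors `φ_i ∈ ℂ^{N_B}` with `U ψ_i = Ψ_ref ⊗ φ_i` for all `i`) exists
if and only if the dimension of the complex linear span of `{ψ_1, …, ψ_Q}` is at most `N_B`,
the dimension of the target latent space. -/
theorem perfect_autoencoder_iff_span_le_latent_dim
    (NA NB Q : ℕ) (hNA : 1 ≤ NA) (hNB : 1 ≤ NB)
    (Ψref : Fin NA → ℂ) (href : star Ψref ⬝ᵥ Ψref = 1)
    (ψ : Fin Q → (Fin NA × Fin NB → ℂ))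
    (hψ : ∀ i, star (ψ i) ⬝ᵥ ψ i = 1) :
    (∃ U : Matrix (Fin NA × Fin NB) (Fin NA × Fin NB) ℂ,
        U * Uᴴ = 1 ∧ Uᴴ * U = 1 ∧
        ∀ i, ∃ φ : Fin NB → ℂ, star φ ⬝ᵥ φ = 1 ∧ U *ᵥ ψ i = tensorVec Ψref φ)
      ↔ Module.finrank ℂ (Submodule.span ℂ (Set.range ψ)) ≤ NB := by
  classical
  constructor
  · rintro ⟨U, hUU, hU'U, hφ⟩
    choose φ hφ1 hφ2 using hφ
    let e : (Fin NA × Fin NB → ℂ) ≃ₗ[ℂ] (Fin NA × Fin NB → ℂ) :=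
      LinearEquiv.ofLinear U.mulVecLin Uᴴ.mulVecLin
        (by rw [← Matrix.mulVecLin_mul, hUU, Matrix.mulVecLin_one])
        (by rw [← Matrix.mulVecLin_mul, hU'U, Matrix.mulVecLin_one])
    have he : ∀ v, e v = U *ᵥ v := fun v => rfl
    let T : (Fin NB → ℂ) →ₗ[ℂ] (Fin NA × Fin NB → ℂ) := tensorLin Ψref
    have h1 : (Submodule.span ℂ (Set.range ψ)).map
          (e : (Fin NA × Fin NB → ℂ) →ₗ[ℂ] (Fin NA × Fin NB → ℂ))
        ≤ LinearMap.range T := by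
      rw [Submodule.map_span, Submodule.span_le]
      rintro _ ⟨_, ⟨i, rfl⟩, rfl⟩
      refine ⟨φ i, ?_⟩
      show tensorVec Ψref (φ i) = e (ψ i)
      rw [he, hφ2 i]
    have h2 : Module.finrank ℂ (Submodule.span ℂ (Set.range ψ))
        = Module.finrank ℂ ((Submodule.span ℂ (Set.range ψ)).map
            (e : (Fin NA × Fin NB → ℂ) →ₗ[ℂ] (Fin NA × Fin NB → ℂ))) :=
      (LinearEquiv.finrank_map_eq e _).symm
    have h3 : Module.finrank ℂ ((Submodule.span ℂ (Set.range ψ)).map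
            (e : (Fin NA × Fin NB → ℂ) →ₗ[ℂ] (Fin NA × Fin NB → ℂ)))
        ≤ Module.finrank ℂ (LinearMap.range T) :=
      Submodule.finrank_mono h1
    have h4 : Module.finrank ℂ (LinearMap.range T) ≤ Module.finrank ℂ (Fin NB → ℂ) :=
      LinearMap.finrank_range_le T
    have h5 : Module.finrank ℂ (Fin NB → ℂ) = NB := by simp
    omega
  · intro hrank
    let eE : (Fin NA × Fin NB → ℂ) ≃ₗ[ℂ] EuclideanSpace ℂ (Fin NA × Fin NB) :=
      (WithLp.linearEquiv 2 ℂ _).symm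
    let ψ' : Fin Q → EuclideanSpace ℂ (Fin NA × Fin NB) := fun i => eE (ψ i)
    let S : Submodule ℂ (EuclideanSpace ℂ (Fin NA × Fin NB)) :=
      Submodule.span ℂ (Set.range ψ')
    have hmem : ∀ i, ψ' i ∈ S := fun i => Submodule.subset_span ⟨i, rfl⟩
    have hSmap : S = (Submodule.span ℂ (Set.range ψ)).map
        (eE : (Fin NA × Fin NB → ℂ) →ₗ[ℂ] EuclideanSpace ℂ (Fin NA × Fin NB)) := by
      rw [Submodule.map_span]
      congr 1
      rw [← Set.range_comp]
      rfl
    have hS : Module.finrank ℂ S ≤ NB := by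
      rw [hSmap, LinearEquiv.finrank_map_eq]
      exact hrank
    obtain ⟨W, hW⟩ := exists_isometry Ψref href S hS
    choose φi hφ1 hφ2 using fun i => hW ⟨ψ' i, hmem i⟩
    have hunit : ∀ i, star (φi i) ⬝ᵥ φi i = 1 := by
      intro i
      rw [hφ1 i, EuclideanSpace.inner_eq_star_dotProduct, dotProduct_comm]
      exact hψ i
    have hUinner := W.inner_map_map
    -- the matrix of W
    let f : (Fin NA × Fin NB → ℂ) →ₗ[ℂ] (Fin NA × Fin NB → ℂ) :=
      (eE.symm : EuclideanSpace ℂ (Fin NA × Fin NB) →ₗ[ℂ] (Fin NA × Fin NB → ℂ)) ∘ₗ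
        W.toLinearMap ∘ₗ
        (eE : (Fin NA × Fin NB → ℂ) →ₗ[ℂ] EuclideanSpace ℂ (Fin NA × Fin NB))
    have hf : ∀ u v, star (f u) ⬝ᵥ f v = star u ⬝ᵥ v := by
      intro u v
      rw [dotProduct_comm, dotProduct_comm (star u)]
      exact hUinner (eE u) (eE v)
    let U : Matrix (Fin NA × Fin NB) (Fin NA × Fin NB) ℂ := LinearMap.toMatrix' f
    have hUmul : ∀ v, U *ᵥ v = f v := by
      intro v
      rw [← Matrix.toLin'_apply, Matrix.toLin'_toMatrix']
    have hU'U : Uᴴ * U = 1 := by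
      ext i j
      have hcol : ∀ q k, U k q = f (fun j' => if j' = q then 1 else 0) k := by
        intro q k
        rw [show U k q = LinearMap.toMatrix' f k q from rfl, LinearMap.toMatrix'_apply]
        exact congrArg (fun w => f w k) (by funext j'; simp [Pi.single_apply])
      have hent : (Uᴴ * U) i j
          = star (f fun j' => if j' = i then 1 else 0) ⬝ᵥ
            (f fun j' => if j' = j then 1 else 0) := by
        simp only [Matrix.mul_apply, Matrix.conjTranspose_apply, dotProduct, Pi.star_apply]
        refine Finset.sum_congr rfl fun k _ => ?_
        rw [hcol i k, hcol j k]
      rw [hent, hf]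
      simp [dotProduct, Matrix.one_apply, apply_ite, eq_comm]
    refine ⟨U, mul_eq_one_comm.mpr hU'U, hU'U, ?_⟩
    intro i
    refine ⟨φi i, hunit i, ?_⟩
    rw [hUmul]
    show eE.symm (W (eE (ψ i))) = tensorVec Ψref (φi i)
    have hx : eE (ψ i) = (⟨ψ' i, hmem i⟩ : S) := rfl
    rw [hx, hφ2 i]
    rfl
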